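/- For every i = 1, …, m+1 one has Ẽ_i + F̃_i + E_i = 0, where Ẽ_i = −[∏_{k=1}^{m}(η_k − β̃_i) · ∏_{k≠i} β̃_k · ∏_{k=1}^{n}(β̃_i + ϑ_k) · ∏_{k=1}^{n+1} γ̃_k] / [∏_{k=1}^{m} η_k · ∏_{k≠i}(β̃_k − β̃_i) · ∏_{k=1}^{n} ϑ_k · ∏_{k=1}^{n+1}(β̃_i + γ̃_k)], E_i = [∏_{k=1}^{m+1} β̂_k · ∏_{k=1}^{n+1} γ̂_k · ∏_{k=1}^{m}(β̃_i − η_k) · ∏_{k=1}^{n}(β̃_i + ϑ_k)] / [∏_{k=1}^{m} η_k · ∏_{k=1}^{n} ϑ_k · ∏_{k≠i}(β̃_i − β̃_k) · ∏_{k=1}^{n+1}(β̃_i + γ̂_k)] · ∑_{j=1}^{m+1} [∏_{k=1, k≠i}^{m+1}(β̂_j − β̃_k)] / [β̂_j · ∏_{k≠j}(β̂_j − β̂_k)], and F̃_i = [∏_{k=1}^{m+1} β̃_k · ∏_{k=1}^{n+1} γ̃_k · ∏_{k=1}^{m}(β̃_i − η_k) · ∏_{k=1}^{n}(β̃_i +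 ϑ_k)] / [∏_{k=1}^{m} η_k · ∏_{k=1}^{n} ϑ_k · ∏_{k≠i}(β̃_i − β̃_k) · ∏_{k=1}^{n+1}(β̃_i + γ̂_k)] · ∑_{j=1}^{n+1} [∏_{k=1}^{n+1}(γ̂_k − γ̃_j)] / [−γ̃_j (β̃_i + γ̃_j) · ∏_{k≠j}(γ̃_k − γ̃_j)]. -/
import Mathlib

open Polynomial Finset

lemma prod_neg' {ι : Type*} (s : Finset ι) (f : ι → ℝ) :
    ∏ i ∈ s, (-f i) = (-1 : ℝ) ^ s.card * ∏ i ∈ s, f i := by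
  calc ∏ i ∈ s, (-f i) = ∏ i ∈ s, ((-1 : ℝ) * f i) := by simp
    _ = (∏ _i ∈ s, (-1 : ℝ)) * ∏ i ∈ s, f i := Finset.prod_mul_distrib
    _ = _ := by rw [Finset.prod_const]

lemma key_pf (s : Finset ℝ) (f : ℝ[X]) (hf : f.degree < ((s.card - 1 : ℕ) : WithBot ℕ)) :
    ∑ j ∈ s, f.eval j * ∏ k ∈ s.erase j, (j - k)⁻¹ = 0 := by
  rcases s.eq_empty_or_nonempty with rfl | hs
  · simp
  have hdeg : f.degree < (s.card : WithBot ℕ) :=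
    lt_of_lt_of_le hf (by exact_mod_cast Nat.sub_le _ _)
  have hint := Lagrange.eq_interpolate (v := id) (s := s) Function.injective_id.injOn
    (by simpa using hdeg)
  have hc0 : f.coeff (s.card - 1) = 0 := Polynomial.coeff_eq_zero_of_degree_lt hf
  have hb : ∀ j ∈ s, (Lagrange.basis s id j).coeff (s.card - 1) = ∏ k ∈ s.erase j, (j - k)⁻¹ := by
    intro j hj
    rw [Lagrange.basis_eq_prod_sub_inv_mul_nodal_div hj, ← Lagrange.nodal_erase_eq_nodal_div hj,
      Polynomial.coeff_C_mul]
    have h1 : (Lagrange.nodal (s.erase j) (id : ℝ → ℝ)).natDegree = s.card - 1 := by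
      rw [Lagrange.natDegree_nodal, Finset.card_erase_of_mem hj]
    have h2 : (Lagrange.nodal (s.erase j) (id : ℝ → ℝ)).coeff (s.card - 1) = 1 := by
      rw [← h1]; exact Lagrange.nodal_monic.coeff_natDegree
    rw [h2, mul_one, Lagrange.nodalWeight]
    simp
  have : ∑ j ∈ s, f.eval j * ∏ k ∈ s.erase j, (j - k)⁻¹
      = (Lagrange.interpolate s id (fun x : ℝ => f.eval x)).coeff (s.card - 1) := by
    rw [Lagrange.interpolate_apply, Polynomial.finset_sum_coeff]
    exact (Finset.sum_congr rfl fun j hj => by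
      rw [Polynomial.coeff_C_mul, hb j hj]).symm
  simp only [id_eq] at hint
  rw [this, ← hint, hc0]

lemma lemA {M : ℕ} (x0 : ℝ) (v : Fin M → ℝ) (hv : Function.Injective v)
    (h0 : ∀ j, v j ≠ x0) (f : ℝ[X]) (hf : f.degree < (M : WithBot ℕ)) :
    f.eval x0 * ∏ k, (x0 - v k)⁻¹
      + ∑ j, f.eval (v j) * ((v j - x0)⁻¹ * ∏ k ∈ Finset.univ.erase j, (v j - v k)⁻¹) = 0 := by
  set t : Finset ℝ := Finset.univ.image v with ht
  have hx0t : x0 ∉ t := by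
    simp only [ht, Finset.mem_image, Finset.mem_univ, true_and]
    rintro ⟨j, hj⟩; exact h0 j hj
  have hinj : ∀ a ∈ (Finset.univ : Finset (Fin M)), ∀ b ∈ Finset.univ, v a = v b → a = b :=
    fun a _ b _ h => hv h
  have hcard_t : t.card = M := by
    rw [ht, Finset.card_image_of_injective _ hv, Finset.card_univ, Fintype.card_fin]
  have hcard : (insert x0 t).card = M + 1 := by
    rw [Finset.card_insert_of_notMem hx0t, hcard_t]
  have hkey := key_pf (insert x0 t) f (by rw [hcard]; simpa using hf)
  rw [Finset.sum_insert hx0t, Finset.erase_insert hx0t] at hkey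
  have hpt : ∏ k ∈ t, (x0 - k)⁻¹ = ∏ k, (x0 - v k)⁻¹ := by
    rw [ht, Finset.prod_image hinj]
  have hsum : ∑ j ∈ t, f.eval j * ∏ k ∈ (insert x0 t).erase j, (j - k)⁻¹
      = ∑ j, f.eval (v j) * ((v j - x0)⁻¹ * ∏ k ∈ Finset.univ.erase j, (v j - v k)⁻¹) := by
    rw [ht, Finset.sum_image hinj]
    refine Finset.sum_congr rfl fun j _ => ?_
    congr 1
    have h2 : (insert x0 (Finset.univ.image v)).erase (v j)
        = insert x0 ((Finset.univ.image v).erase (v j)) :=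
      Finset.erase_insert_of_ne (fun h => h0 j h.symm)
    rw [h2, Finset.prod_insert (fun h => hx0t (Finset.mem_of_mem_erase h))]
    congr 1
    rw [← Finset.image_erase hv, Finset.prod_image (fun a _ b _ h => hv h)]
  rw [hpt] at hkey
  rw [hsum] at hkey
  exact hkey

lemma lemB {M : ℕ} (x0 x1 : ℝ) (v : Fin M → ℝ) (hv : Function.Injective v)
    (h01 : x0 ≠ x1) (h0 : ∀ j, v j ≠ x0) (h1 : ∀ j, v j ≠ x1)
    (f : ℝ[X]) (hf : f.degree < ((M + 1 : ℕ) : WithBot ℕ)) :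
    f.eval x0 * ((x0 - x1)⁻¹ * ∏ k, (x0 - v k)⁻¹)
      + f.eval x1 * ((x1 - x0)⁻¹ * ∏ k, (x1 - v k)⁻¹)
      + ∑ j, f.eval (v j) * ((v j - x0)⁻¹ * ((v j - x1)⁻¹ *
          ∏ k ∈ Finset.univ.erase j, (v j - v k)⁻¹)) = 0 := by
  set t : Finset ℝ := Finset.univ.image v with ht
  have hinj : ∀ a ∈ (Finset.univ : Finset (Fin M)), ∀ b ∈ Finset.univ, v a = v b → a = b :=
    fun a _ b _ h => hv h
  have hx0t : x0 ∉ t := by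
    simp only [ht, Finset.mem_image, Finset.mem_univ, true_and]
    rintro ⟨j, hj⟩; exact h0 j hj
  have hx1t : x1 ∉ t := by
    simp only [ht, Finset.mem_image, Finset.mem_univ, true_and]
    rintro ⟨j, hj⟩; exact h1 j hj
  have hx0' : x0 ∉ insert x1 t := by
    simp only [Finset.mem_insert]; rintro (h | h); exacts [h01 h, hx0t h]
  have hcard_t : t.card = M := by
    rw [ht, Finset.card_image_of_injective _ hv, Finset.card_univ, Fintype.card_fin]
  have hcard : (insert x0 (insert x1 t)).card = M + 2 := by
    rw [Finset.card_insert_of_notMem hx0', Finset.card_insert_of_notMem hx1t, hcard_t]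
  have hkey := key_pf (insert x0 (insert x1 t)) f (by rw [hcard]; simpa using hf)
  rw [Finset.sum_insert hx0', Finset.erase_insert hx0', Finset.sum_insert hx1t] at hkey
  have e1 : (insert x0 (insert x1 t)).erase x1 = insert x0 t := by
    rw [Finset.erase_insert_of_ne h01, Finset.erase_insert hx1t]
  rw [e1] at hkey
  rw [Finset.prod_insert hx1t, Finset.prod_insert hx0t] at hkey
  have hpt0 : ∏ k ∈ t, (x0 - k)⁻¹ = ∏ k, (x0 - v k)⁻¹ := by rw [ht, Finset.prod_image hinj]
  have hpt1 : ∏ k ∈ t, (x1 - k)⁻¹ = ∏ k, (x1 - v k)⁻¹ := by rw [ht, Finset.prod_image hinj]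
  rw [hpt0, hpt1] at hkey
  have hsum : ∑ j ∈ t, f.eval j * ∏ k ∈ (insert x0 (insert x1 t)).erase j, (j - k)⁻¹
      = ∑ j, f.eval (v j) * ((v j - x0)⁻¹ * ((v j - x1)⁻¹ *
          ∏ k ∈ Finset.univ.erase j, (v j - v k)⁻¹)) := by
    rw [ht, Finset.sum_image hinj]
    refine Finset.sum_congr rfl fun j _ => ?_
    congr 1
    have h2 : (insert x0 (insert x1 (Finset.univ.image v))).erase (v j)
        = insert x0 (insert x1 ((Finset.univ.image v).erase (v j))) := by
      rw [Finset.erase_insert_of_ne (fun h => h0 j h.symm),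
        Finset.erase_insert_of_ne (fun h => h1 j h.symm)]
    have hx1e : x1 ∉ (Finset.univ.image v).erase (v j) :=
      fun h => hx1t (Finset.mem_of_mem_erase h)
    have hx0e : x0 ∉ insert x1 ((Finset.univ.image v).erase (v j)) := by
      simp only [Finset.mem_insert]
      rintro (h | h); exacts [h01 h, hx0t (Finset.mem_of_mem_erase h)]
    rw [h2, Finset.prod_insert hx0e, Finset.prod_insert hx1e]
    congr 2
    rw [← Finset.image_erase hv, Finset.prod_image (fun a _ b _ h => hv h)]
  rw [hsum] at hkey
  linarith [hkey]

lemma S1L {m : ℕ} (βt βh : Fin (m + 1) → ℝ) (hβt : Function.Injective βt)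
    (hβh : Function.Injective βh) (hβhp : ∀ k, 0 < βh k) (i : Fin (m + 1)) :
    ∑ j, (∏ k ∈ Finset.univ.erase i, (βh j - βt k)) /
        (βh j * ∏ k ∈ Finset.univ.erase j, (βh j - βh k))
      = (∏ k ∈ Finset.univ.erase i, βt k) / ∏ k, βh k := by
  set f1 : ℝ[X] := ∏ k ∈ Finset.univ.erase i, (X - C (βt k)) with hf1
  have hev : ∀ x : ℝ, f1.eval x = ∏ k ∈ Finset.univ.erase i, (x - βt k) := by
    intro x; rw [hf1, Polynomial.eval_prod]; simp
  have hcard : (Finset.univ.erase i).card = m := by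
    rw [Finset.card_erase_of_mem (Finset.mem_univ i), Finset.card_univ, Fintype.card_fin]
    omega
  have hnd : f1.natDegree ≤ m := by
    refine le_trans (Polynomial.natDegree_prod_le _ _) ?_
    simp [Polynomial.natDegree_X_sub_C, hcard]
  have hdeg : f1.degree < ((m + 1 : ℕ) : WithBot ℕ) := by
    have hd1 : f1.degree ≤ (f1.natDegree : WithBot ℕ) := Polynomial.degree_le_natDegree
    have hd2 : (f1.natDegree : WithBot ℕ) ≤ ((m : ℕ) : WithBot ℕ) := by exact_mod_cast hnd
    have hd3 : ((m : ℕ) : WithBot ℕ) < ((m + 1 : ℕ) : WithBot ℕ) := by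
      exact_mod_cast Nat.lt_succ_self m
    exact lt_of_le_of_lt (le_trans hd1 hd2) hd3
  have hkey := lemA 0 βh hβh (fun j => ne_of_gt (hβhp j)) f1 hdeg
  have hsum : ∑ j, (∏ k ∈ Finset.univ.erase i, (βh j - βt k)) /
        (βh j * ∏ k ∈ Finset.univ.erase j, (βh j - βh k))
      = ∑ j, f1.eval (βh j) * ((βh j - 0)⁻¹ * ∏ k ∈ Finset.univ.erase j, (βh j - βh k)⁻¹) := by
    refine Finset.sum_congr rfl fun j _ => ?_
    rw [hev, sub_zero, div_eq_mul_inv, mul_inv, ← Finset.prod_inv_distrib]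
  rw [hsum]
  have hc : ((-1 : ℝ) ^ (m + 1))⁻¹ = (-1 : ℝ) ^ (m + 1) := by
    rw [← inv_pow]; norm_num
  have he : (-1 : ℝ) ^ m * (-1 : ℝ) ^ m = 1 := by rw [← mul_pow]; norm_num
  have hT0 : f1.eval 0 * ∏ k, ((0 : ℝ) - βh k)⁻¹
      = -((∏ k ∈ Finset.univ.erase i, βt k) / ∏ k, βh k) := by
    have e0 : f1.eval 0 = (-1 : ℝ) ^ m * ∏ k ∈ Finset.univ.erase i, βt k := by
      rw [hev]
      calc ∏ k ∈ Finset.univ.erase i, ((0 : ℝ) - βt k)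
          = ∏ k ∈ Finset.univ.erase i, -(βt k) := by
            exact Finset.prod_congr rfl fun k _ => by ring
        _ = _ := by rw [prod_neg', hcard]
    have e1 : ∏ k, ((0 : ℝ) - βh k)⁻¹ = (-1 : ℝ) ^ (m + 1) * (∏ k, βh k)⁻¹ := by
      rw [Finset.prod_inv_distrib]
      have : ∏ k, ((0 : ℝ) - βh k) = (-1 : ℝ) ^ (m + 1) * ∏ k, βh k := by
        calc ∏ k, ((0 : ℝ) - βh k) = ∏ k, -(βh k) := by
              exact Finset.prod_congr rfl fun k _ => by ring
          _ = _ := by rw [prod_neg', Finset.card_univ, Fintype.card_fin]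
      rw [this, mul_inv, hc]
    rw [e0, e1, pow_succ, div_eq_mul_inv]
    linear_combination (-((∏ k ∈ Finset.univ.erase i, βt k) * (∏ k, βh k)⁻¹)) * he
  rw [hT0] at hkey
  linarith [hkey]

lemma S2L {n : ℕ} (β : ℝ) (hβ : 0 < β) (γt γh : Fin (n + 1) → ℝ)
    (hγt : Function.Injective γt) (hγtp : ∀ k, 0 < γt k) :
    ∑ j, (∏ k, (γh k - γt j)) /
        (-γt j * (β + γt j) * ∏ k ∈ Finset.univ.erase j, (γt k - γt j))
      = (∏ k, (β + γh k)) / (β * ∏ k, (β + γt k)) - (∏ k, γh k) / (β * ∏ k, γt k) := by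
  set f2 : ℝ[X] := ∏ k : Fin (n + 1), (C (γh k) - X) with hf2
  have hev : ∀ x : ℝ, f2.eval x = ∏ k, (γh k - x) := by
    intro x; rw [hf2, Polynomial.eval_prod]; simp
  have hfac : ∀ a : ℝ, (C a - X : ℝ[X]).natDegree = 1 := by
    intro a
    have h : (C a - X : ℝ[X]) = -(X - C a) := by ring
    rw [h, Polynomial.natDegree_neg, Polynomial.natDegree_X_sub_C]
  have hnd : f2.natDegree ≤ n + 1 := by
    refine le_trans (Polynomial.natDegree_prod_le _ _) ?_
    simp [hfac]
  have hdeg : f2.degree < ((n + 1 + 1 : ℕ) : WithBot ℕ) := by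
    have hd1 : f2.degree ≤ (f2.natDegree : WithBot ℕ) := Polynomial.degree_le_natDegree
    have hd2 : (f2.natDegree : WithBot ℕ) ≤ ((n + 1 : ℕ) : WithBot ℕ) := by exact_mod_cast hnd
    have hd3 : ((n + 1 : ℕ) : WithBot ℕ) < ((n + 1 + 1 : ℕ) : WithBot ℕ) := by
      exact_mod_cast Nat.lt_succ_self (n + 1)
    exact lt_of_le_of_lt (le_trans hd1 hd2) hd3
  have h01 : (0 : ℝ) ≠ -β := by intro h; linarith [hβ, h]
  have h0 : ∀ j, γt j ≠ 0 := fun j => ne_of_gt (hγtp j)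
  have h1 : ∀ j, γt j ≠ -β := fun j => by have := hγtp j; intro h; rw [h] at this; linarith
  have hkey := lemB 0 (-β) γt hγt h01 h0 h1 f2 hdeg
  have hc : ((-1 : ℝ) ^ n)⁻¹ = (-1 : ℝ) ^ n := by rw [← inv_pow]; norm_num
  have hc1 : ((-1 : ℝ) ^ (n + 1))⁻¹ = (-1 : ℝ) ^ (n + 1) := by rw [← inv_pow]; norm_num
  have he : (-1 : ℝ) ^ (n + 1) * (-1 : ℝ) ^ (n + 1) = 1 := by rw [← mul_pow]; norm_num
  -- rewrite the target sum as (-1)^(n+1) times the lemB sum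
  have hsum : ∑ j, (∏ k, (γh k - γt j)) /
        (-γt j * (β + γt j) * ∏ k ∈ Finset.univ.erase j, (γt k - γt j))
      = (-1 : ℝ) ^ (n + 1) * ∑ j, f2.eval (γt j) * ((γt j - 0)⁻¹ * ((γt j - (-β))⁻¹ *
          ∏ k ∈ Finset.univ.erase j, (γt j - γt k)⁻¹)) := by
    rw [Finset.mul_sum]
    refine Finset.sum_congr rfl fun j _ => ?_
    have hpr : ∏ k ∈ Finset.univ.erase j, (γt k - γt j)
        = (-1 : ℝ) ^ n * ∏ k ∈ Finset.univ.erase j, (γt j - γt k) := by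
      have h := prod_neg' (Finset.univ.erase j) (fun k => γt j - γt k)
      simp only [neg_sub] at h
      rw [h, Finset.card_erase_of_mem (Finset.mem_univ j), Finset.card_univ, Fintype.card_fin]
      norm_num
    rw [hev, sub_zero, sub_neg_eq_add, hpr, pow_succ, div_eq_mul_inv]
    simp only [mul_inv, inv_neg, hc, ← Finset.prod_inv_distrib]
    generalize (-1 : ℝ) ^ n = e
    ring
  rw [hsum]
  -- compute the two extra terms of lemB
  have hT0 : f2.eval 0 * (((0 : ℝ) - -β)⁻¹ * ∏ k, ((0 : ℝ) - γt k)⁻¹)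
      = (∏ k, γh k) * (β⁻¹ * ((-1 : ℝ) ^ (n + 1) * (∏ k, γt k)⁻¹)) := by
    have e0 : f2.eval 0 = ∏ k, γh k := by rw [hev]; simp
    have e1 : ∏ k, ((0 : ℝ) - γt k)⁻¹ = (-1 : ℝ) ^ (n + 1) * (∏ k, γt k)⁻¹ := by
      rw [Finset.prod_inv_distrib]
      have : ∏ k, ((0 : ℝ) - γt k) = (-1 : ℝ) ^ (n + 1) * ∏ k, γt k := by
        calc ∏ k, ((0 : ℝ) - γt k) = ∏ k, -(γt k) :=
              Finset.prod_congr rfl fun k _ => by ring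
          _ = _ := by rw [prod_neg', Finset.card_univ, Fintype.card_fin]
      rw [this, mul_inv, hc1]
    rw [e0, e1]
    have : (0 : ℝ) - -β = β := by ring
    rw [this]
  have hT1 : f2.eval (-β) * ((-β - (0 : ℝ))⁻¹ * ∏ k, ((-β : ℝ) - γt k)⁻¹)
      = (∏ k, (β + γh k)) * (-β⁻¹ * ((-1 : ℝ) ^ (n + 1) * (∏ k, (β + γt k))⁻¹)) := by
    have e0 : f2.eval (-β) = ∏ k, (β + γh k) := by
      rw [hev]; exact Finset.prod_congr rfl fun k _ => by ring
    have e1 : ∏ k, ((-β : ℝ) - γt k)⁻¹ = (-1 : ℝ) ^ (n + 1) * (∏ k, (β + γt k))⁻¹ := by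
      rw [Finset.prod_inv_distrib]
      have : ∏ k, ((-β : ℝ) - γt k) = (-1 : ℝ) ^ (n + 1) * ∏ k, (β + γt k) := by
        calc ∏ k, ((-β : ℝ) - γt k) = ∏ k, -(β + γt k) :=
              Finset.prod_congr rfl fun k _ => by ring
          _ = _ := by rw [prod_neg', Finset.card_univ, Fintype.card_fin]
      rw [this, mul_inv, hc1]
    have e2 : (-β - (0 : ℝ))⁻¹ = -β⁻¹ := by rw [sub_zero, inv_neg]
    rw [e0, e1, e2]
  rw [hT0, hT1] at hkey
  have hS : ∑ j, f2.eval (γt j) * ((γt j - 0)⁻¹ * ((γt j - (-β))⁻¹ *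
      ∏ k ∈ Finset.univ.erase j, (γt j - γt k)⁻¹))
      = -((∏ k, γh k) * (β⁻¹ * ((-1 : ℝ) ^ (n + 1) * (∏ k, γt k)⁻¹)))
        - (∏ k, (β + γh k)) * (-β⁻¹ * ((-1 : ℝ) ^ (n + 1) * (∏ k, (β + γt k))⁻¹)) := by
    linarith [hkey]
  rw [hS, div_eq_mul_inv, div_eq_mul_inv, mul_inv, mul_inv]
  linear_combination ((∏ k, (β + γh k)) * (β⁻¹ * (∏ k, (β + γt k))⁻¹)
    - (∏ k, γh k) * (β⁻¹ * (∏ k, γt k)⁻¹)) * he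

/-- First family of identities in (C.15), from the proof of Corollary 3.2:
`Ẽ_i + F̃_i + E_i = 0` for `i = 1, …, m+1`, where `Ẽ_i` is the coefficient from (3.10),
and `E_i`, `F̃_i` are the coefficients `E_i^1` from (3.25) and `F̃_i^1` from (3.28)
evaluated at `y = b_1`. -/
theorem stmt_15 (m n : ℕ) (hm : 1 ≤ m) (hn : 1 ≤ n)
    (η : Fin m → ℝ) (ϑ : Fin n → ℝ)
    (βt : Fin (m + 1) → ℝ) (γt : Fin (n + 1) → ℝ)
    (βh : Fin (m + 1) → ℝ) (γh : Fin (n + 1) → ℝ)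
    (hβt0 : 0 < βt 0)
    (hβtint : ∀ k : Fin m, βt k.castSucc < η k ∧ η k < βt k.succ)
    (hγt0 : 0 < γt 0)
    (hγtint : ∀ k : Fin n, γt k.castSucc < ϑ k ∧ ϑ k < γt k.succ)
    (hβh0 : 0 < βh 0)
    (hβhint : ∀ k : Fin m, βh k.castSucc < η k ∧ η k < βh k.succ)
    (hγh0 : 0 < γh 0)
    (hγhint : ∀ k : Fin n, γh k.castSucc < ϑ k ∧ ϑ k < γh k.succ)
    (Et : Fin (m + 1) → ℝ)
    (hEt : ∀ i, Et i =
      -(((∏ k, (η k - βt i)) * (∏ k ∈ Finset.univ.erase i, βt k) *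
          (∏ k, (βt i + ϑ k)) * (∏ k, γt k)) /
        ((∏ k, η k) * (∏ k ∈ Finset.univ.erase i, (βt k - βt i)) *
          (∏ k, ϑ k) * (∏ k, (βt i + γt k)))))
    (E : Fin (m + 1) → ℝ)
    (hE : ∀ i, E i =
      (((∏ k, βh k) * (∏ k, γh k) * (∏ k, (βt i - η k)) * (∏ k, (βt i + ϑ k))) /
        ((∏ k, η k) * (∏ k, ϑ k) * (∏ k ∈ Finset.univ.erase i, (βt i - βt k)) *
          (∏ k, (βt i + γh k)))) *
      (∑ j : Fin (m + 1), (∏ k ∈ Finset.univ.erase i, (βh j - βt k)) /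
        (βh j * ∏ k ∈ Finset.univ.erase j, (βh j - βh k))))
    (Ft : Fin (m + 1) → ℝ)
    (hFt : ∀ i, Ft i =
      (((∏ k, βt k) * (∏ k, γt k) * (∏ k, (βt i - η k)) * (∏ k, (βt i + ϑ k))) /
        ((∏ k, η k) * (∏ k, ϑ k) * (∏ k ∈ Finset.univ.erase i, (βt i - βt k)) *
          (∏ k, (βt i + γh k)))) *
      (∑ j : Fin (n + 1), (∏ k, (γh k - γt j)) /
        (-γt j * (βt i + γt j) * ∏ k ∈ Finset.univ.erase j, (γt k - γt j)))) :
    ∀ i : Fin (m + 1), Et i + Ft i + E i = 0 := by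
  have hβtSM : StrictMono βt := Fin.strictMono_iff_lt_succ.mpr
    (fun k => lt_trans (hβtint k).1 (hβtint k).2)
  have hγtSM : StrictMono γt := Fin.strictMono_iff_lt_succ.mpr
    (fun k => lt_trans (hγtint k).1 (hγtint k).2)
  have hβhSM : StrictMono βh := Fin.strictMono_iff_lt_succ.mpr
    (fun k => lt_trans (hβhint k).1 (hβhint k).2)
  have hβtp : ∀ k, 0 < βt k := fun k => lt_of_lt_of_le hβt0 (hβtSM.monotone (Fin.zero_le k))
  have hγtp : ∀ k, 0 < γt k := fun k => lt_of_lt_of_le hγt0 (hγtSM.monotone (Fin.zero_le k))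
  have hβhp : ∀ k, 0 < βh k := fun k => lt_of_lt_of_le hβh0 (hβhSM.monotone (Fin.zero_le k))
  have hγhp : ∀ k, 0 < γh k := by
    have hγhSM : StrictMono γh := Fin.strictMono_iff_lt_succ.mpr
      (fun k => lt_trans (hγhint k).1 (hγhint k).2)
    exact fun k => lt_of_lt_of_le hγh0 (hγhSM.monotone (Fin.zero_le k))
  have hηp : ∀ k, 0 < η k := fun k => lt_trans (hβtp _) (hβtint k).1
  have hϑp : ∀ k, 0 < ϑ k := fun k => lt_trans (hγtp _) (hγtint k).1
  intro i
  rw [hEt i, hE i, hFt i]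
  rw [S1L βt βh hβtSM.injective hβhSM.injective hβhp i]
  rw [S2L (βt i) (hβtp i) γt γh hγtSM.injective hγtp]
  have h1 : ∏ k, (η k - βt i) = (-1 : ℝ) ^ m * ∏ k, (βt i - η k) := by
    calc ∏ k, (η k - βt i) = ∏ k, -(βt i - η k) :=
          Finset.prod_congr rfl fun k _ => by ring
      _ = _ := by rw [prod_neg', Finset.card_univ, Fintype.card_fin]
  have h2 : ∏ k ∈ Finset.univ.erase i, (βt k - βt i)
      = (-1 : ℝ) ^ m * ∏ k ∈ Finset.univ.erase i, (βt i - βt k) := by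
    calc ∏ k ∈ Finset.univ.erase i, (βt k - βt i)
        = ∏ k ∈ Finset.univ.erase i, -(βt i - βt k) :=
          Finset.prod_congr rfl fun k _ => by ring
      _ = _ := by
          rw [prod_neg', Finset.card_erase_of_mem (Finset.mem_univ i),
            Finset.card_univ, Fintype.card_fin]
          norm_num
  have h3 : ∏ k, βt k = βt i * ∏ k ∈ Finset.univ.erase i, βt k :=
    (Finset.mul_prod_erase _ _ (Finset.mem_univ i)).symm
  rw [h1, h2, h3]
  have hH : (∏ k, η k) ≠ 0 := ne_of_gt (Finset.prod_pos fun k _ => hηp k)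
  have hΘ : (∏ k, ϑ k) ≠ 0 := ne_of_gt (Finset.prod_pos fun k _ => hϑp k)
  have hd : (∏ k ∈ Finset.univ.erase i, (βt i - βt k)) ≠ 0 := by
    rw [Finset.prod_ne_zero_iff]
    intro k hk
    exact sub_ne_zero_of_ne fun h => (Finset.mem_erase.mp hk).1 (hβtSM.injective h.symm)
  have hB : (∏ k ∈ Finset.univ.erase i, βt k) ≠ 0 :=
    ne_of_gt (Finset.prod_pos fun k _ => hβtp k)
  have hPγt : (∏ k, (βt i + γt k)) ≠ 0 :=
    ne_of_gt (Finset.prod_pos fun k _ => by linarith [hβtp i, hγtp k])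
  have hPγh : (∏ k, (βt i + γh k)) ≠ 0 :=
    ne_of_gt (Finset.prod_pos fun k _ => by linarith [hβtp i, hγhp k])
  have hDγt : (∏ k, γt k) ≠ 0 := ne_of_gt (Finset.prod_pos fun k _ => hγtp k)
  have hDγh : (∏ k, γh k) ≠ 0 := ne_of_gt (Finset.prod_pos fun k _ => hγhp k)
  have hPβh : (∏ k, βh k) ≠ 0 := ne_of_gt (Finset.prod_pos fun k _ => hβhp k)
  have hβ : βt i ≠ 0 := ne_of_gt (hβtp i)
  set e : ℝ := (-1 : ℝ) ^ m with hee
  have heNe : e ≠ 0 := pow_ne_zero _ (by norm_num)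
  field_simp
  ring
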